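/- Let n ≥ 3 be an integer, κ1, κ2, κ₋₁, κ₋ > 0, and suppose 0 < ᾱ < 1. Set q̂ := (n − (n−2) ᾱ)/2 and p̂ := κ₋ q̂ ᾱ / κ2. Then the quantity ŝ := n − p̂ − 2 q̂ satisfies ŝ = (κ₋ q̂ (κ₋₁ (n−2) + κ₋ q̂ (n−1)) / ((n−2) κ1 κ2)) · ᾱ, and in particular ŝ > 0. -/

import Mathlib

/-- Formula and positivity for `ŝ = n - p̂ - 2 q̂` at the steady state. -/
theorem stmt_10 (n : ℕ) (hn : 3 ≤ n) (k1 k2 km1 km : ℝ)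
    (hk1 : 0 < k1) (hk2 : 0 < k2) (hkm1 : 0 < km1) (hkm : 0 < km)
    (A : ℝ)
    (hA : A = (n : ℝ) / ((n : ℝ) - 2)
      + (km1 + k1 - Real.sqrt ((k1 + km1) ^ 2 + 4 * k1 * k2 * ((n : ℝ) - 1)))
          / (km * ((n : ℝ) - 1)))
    (hA0 : 0 < A) (hA1 : A < 1)
    (qh ph sh : ℝ)
    (hqh : qh = ((n : ℝ) - ((n : ℝ) - 2) * A) / 2)
    (hph : ph = km * qh * A / k2)
    (hsh : sh = (n : ℝ) - ph - 2 * qh) :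
    sh = km * qh * (km1 * ((n : ℝ) - 2) + km * qh * ((n : ℝ) - 1))
        / (((n : ℝ) - 2) * k1 * k2) * A ∧
    0 < sh := by
  set N : ℝ := (n : ℝ) with hN
  have hN3 : (3 : ℝ) ≤ N := by rw [hN]; exact_mod_cast hn
  have hN2 : (0 : ℝ) < N - 2 := by linarith
  have hN1 : (0 : ℝ) < N - 1 := by linarith
  set S : ℝ := Real.sqrt ((k1 + km1) ^ 2 + 4 * k1 * k2 * (N - 1)) with hSdef
  have hS2 : S ^ 2 = (k1 + km1) ^ 2 + 4 * k1 * k2 * (N - 1) := by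
    rw [hSdef]
    exact Real.sq_sqrt (by positivity)
  -- qh in terms of S
  have hqh' : qh = (N - 2) * (S - k1 - km1) / (2 * km * (N - 1)) := by
    rw [hqh, hA]; field_simp; ring
  have key : 2 * k1 * k2 * (N - 2) = km * qh * (S + km1 + k1) := by
    rw [hqh']
    field_simp
    linear_combination (-1) * hS2
  have hid : sh = km * qh * (km1 * (N - 2) + km * qh * (N - 1))
      / ((N - 2) * k1 * k2) * A := by
    have hf : km1 * (N - 2) + km * qh * (N - 1) = (N - 2) * (S + km1 - k1) / 2 := by
      rw [hqh']; field_simp; ring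
    rw [hsh, hph, hf, hqh]
    field_simp
    linear_combination (2*A) * key + (2*km*A*(S+km1+k1)) * hqh
  refine ⟨hid, ?_⟩
  have hqh0 : 0 < qh := by
    rw [hqh]
    nlinarith
  rw [hid]
  have h1 : 0 < km * qh * (km1 * (N - 2) + km * qh * (N - 1)) := by positivity
  have h2 : 0 < (N - 2) * k1 * k2 := by positivity
  positivity
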